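/- Let p > 1 and k > 0 be real, and let V : (0,∞) → ℝ satisfy 0 < V(x) < 1 and ((1+V(x)²)/(1−V(x)²))^(p−1) · x² · V(x) = k for all x > 0. Then V is strictly decreasing on (0,∞). -/

import Mathlib

lemma F_strictMono (p : ℝ) (hp : 1 < p) {u v : ℝ} (hu : 0 < u) (huv : u < v) (hv : v < 1) :
    ((1 + u ^ 2) / (1 - u ^ 2)) ^ (p - 1) * u < ((1 + v ^ 2) / (1 - v ^ 2)) ^ (p - 1) * v := by
  have h1u : 0 < 1 - u ^ 2 := by nlinarith
  have h1v : 0 < 1 - v ^ 2 := by nlinarith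
  have hbase : (1 + u ^ 2) / (1 - u ^ 2) < (1 + v ^ 2) / (1 - v ^ 2) := by
    rw [div_lt_div_iff₀ h1u h1v]
    nlinarith
  have hbu : 0 < (1 + u ^ 2) / (1 - u ^ 2) := by positivity
  have hrpow : ((1 + u ^ 2) / (1 - u ^ 2)) ^ (p - 1) < ((1 + v ^ 2) / (1 - v ^ 2)) ^ (p - 1) :=
    Real.rpow_lt_rpow hbu.le hbase (by linarith)
  have hbv : 0 < ((1 + v ^ 2) / (1 - v ^ 2)) ^ (p - 1) := Real.rpow_pos_of_pos (by positivity) _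
  exact mul_lt_mul' hrpow.le huv hu.le hbv

/-- For real `p > 1`, `k > 0`, if `V` satisfies `0 < V x < 1` and
`((1 + V x²)/(1 − V x²))^(p−1) · x² · V x = k` for all `x > 0` (real power `Real.rpow`),
then `V` is strictly decreasing on `(0, ∞)`. -/
theorem strictAntiOn_V (p k : ℝ) (hp : 1 < p) (hk : 0 < k) (V : ℝ → ℝ)
    (hV : ∀ x > (0 : ℝ), 0 < V x ∧ V x < 1)
    (heq : ∀ x > (0 : ℝ), ((1 + V x ^ 2) / (1 - V x ^ 2)) ^ (p - 1) * x ^ 2 * V x = k) :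
    StrictAntiOn V (Set.Ioi 0) := by
  intro a ha b hb hab
  simp only [Set.mem_Ioi] at ha hb
  obtain ⟨hVa0, hVa1⟩ := hV a ha
  obtain ⟨hVb0, hVb1⟩ := hV b hb
  have hFa : 0 < ((1 + V a ^ 2) / (1 - V a ^ 2)) ^ (p - 1) * V a := by
    have : 0 < 1 - V a ^ 2 := by nlinarith
    have := Real.rpow_pos_of_pos (show (0:ℝ) < (1 + V a ^ 2) / (1 - V a ^ 2) by positivity) (p - 1)
    positivity
  have hFb : 0 < ((1 + V b ^ 2) / (1 - V b ^ 2)) ^ (p - 1) * V b := by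
    have : 0 < 1 - V b ^ 2 := by nlinarith
    have := Real.rpow_pos_of_pos (show (0:ℝ) < (1 + V b ^ 2) / (1 - V b ^ 2) by positivity) (p - 1)
    positivity
  have hea := heq a ha
  have heb := heq b hb
  have hkey : ((1 + V b ^ 2) / (1 - V b ^ 2)) ^ (p - 1) * V b
      < ((1 + V a ^ 2) / (1 - V a ^ 2)) ^ (p - 1) * V a := by
    have hab2 : a ^ 2 < b ^ 2 := by nlinarith
    have hb2 : 0 < b ^ 2 := by positivity
    rw [← mul_lt_mul_iff_of_pos_right hb2]
    calc ((1 + V b ^ 2) / (1 - V b ^ 2)) ^ (p - 1) * V b * b ^ 2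
        = ((1 + V a ^ 2) / (1 - V a ^ 2)) ^ (p - 1) * V a * a ^ 2 := by
          rw [show ∀ x y z : ℝ, x * y * z = x * z * y from fun _ _ _ => by ring, heb, ← hea]; ring
      _ < ((1 + V a ^ 2) / (1 - V a ^ 2)) ^ (p - 1) * V a * b ^ 2 := by
          exact mul_lt_mul_of_pos_left hab2 hFa
  by_contra h
  push_neg at h
  rcases lt_or_eq_of_le h with hlt | heqv
  · exact absurd (F_strictMono p hp hVa0 hlt hVb1) (not_lt.mpr hkey.le)
  · rw [← heqv] at hkey
    exact lt_irrefl _ hkey
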